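/- Let M_0, …, M_{n-1} be positive bounded kernels on X with all masses m_{k,n}(x) = (M_k⋯M_{n-1}1)(x) positive, and suppose for each k there exist c_k ∈ [0,1] and probability measures ν_k with δ_x M_k(f) ≥ c_k m_{k,k+1}(x) ν_k(f) for all x, f ≥ 0, and d_{k+1} ∈ [0,1] with ν_k(m_{k+1,n}) ≥ d_{k+1} sup_x m_{k+1,n}(x) for all n ≥ k+1. Set γ_i = c_i d_{i+1}. Then for any nonzero finite positive measures μ_1, μ_2 on X and any k ≤ n, ‖μ_1·M_{k,n} − μ_2·M_{k,n}‖_TV ≤ 2 ∏_{i=k}^{n-1}(1−γ_i), where μ·M denotes the normalized measure μM/‖μM‖_TV. -/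

import Mathlib

open MeasureTheory ProbabilityTheory ENNReal

variable {X : Type*} [MeasurableSpace X]

/-- Total variation norm of the difference of two (finite) measures. -/
noncomputable def tvNorm (μ ν : Measure X) : ℝ≥0∞ :=
  (⨆ (A : Set X) (_ : MeasurableSet A), μ A - ν A)
    + (⨆ (A : Set X) (_ : MeasurableSet A), ν A - μ A)

/-- `seqApply M k j μ = μ M_k M_{k+1} ⋯ M_{k+j-1}`. -/
noncomputable def seqApply (M : ℕ → Kernel X X) (k : ℕ) : ℕ → Measure X → Measure X
  | 0, μ => μ
  | j + 1, μ => (seqApply M k j μ).bind (fun x => M (k + j) x)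

namespace ProjContr

/-- The product kernel `M_k M_{k+1} ⋯ M_{k+j-1}` as a kernel. -/
noncomputable def K (M : ℕ → Kernel X X) (k : ℕ) : ℕ → Kernel X X
  | 0 => Kernel.id
  | j + 1 => M (k + j) ∘ₖ K M k j

lemma Kfin (M : ℕ → Kernel X X) (hfin : ∀ i, IsFiniteKernel (M i)) (k : ℕ) :
    ∀ j, IsFiniteKernel (K M k j)
  | 0 => by rw [K]; infer_instance
  | j + 1 => by
    rw [K]
    haveI := Kfin M hfin k j
    haveI := hfin (k + j)
    infer_instance

lemma seqApply_eq_bind (M : ℕ → Kernel X X) (k : ℕ) :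
    ∀ j (μ : Measure X), seqApply M k j μ = μ.bind (K M k j)
  | 0, μ => by
    rw [seqApply, K]
    have : ⇑(Kernel.id : Kernel X X) = Measure.dirac := by
      funext x; exact Kernel.id_apply x
    rw [this, Measure.bind_dirac]
  | j + 1, μ => by
    rw [seqApply, seqApply_eq_bind M k j μ, K,
      Measure.bind_bind (Kernel.measurable _).aemeasurable (Kernel.measurable _).aemeasurable]
    congr 1

lemma seqApply_dirac (M : ℕ → Kernel X X) (k j : ℕ) (x : X) :
    seqApply M k j (Measure.dirac x) = K M k j x := by
  rw [seqApply_eq_bind, Measure.dirac_bind (Kernel.measurable _)]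

lemma K_succ_left (M : ℕ → Kernel X X) (hfin : ∀ i, IsFiniteKernel (M i)) (k : ℕ) :
    ∀ j, K M k (j + 1) = (K M (k + 1) j) ∘ₖ (M k)
  | 0 => by
    rw [K, K, K, Kernel.comp_id, Kernel.id_comp]
    rfl
  | j + 1 => by
    haveI := hfin (k + (j + 1))
    have h1 : K M k (j + 1 + 1) = M (k + (j + 1)) ∘ₖ K M k (j + 1) := rfl
    rw [h1, K_succ_left M hfin k j, ← Kernel.comp_assoc]
    have h2 : K M (k + 1) (j + 1) = M (k + 1 + j) ∘ₖ K M (k + 1) j := rfl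
    have h3 : k + (j + 1) = k + 1 + j := by omega
    rw [h2, h3]


lemma core_contract {α β : Measure X} (hα : IsProbabilityMeasure α) (hβ : IsProbabilityMeasure β)
    {g : X → ℝ≥0∞} (hg : Measurable g) {t D : ℝ≥0∞} (ht : t ≠ ∞) (hgt : ∀ x, g x ≤ t)
    (hD : ∀ A : Set X, MeasurableSet A → α A - β A ≤ D) :
    (∫⁻ x, g x ∂α) - (∫⁻ x, g x ∂β) ≤ t * D := by
  set f : X → ℝ := fun x => (g x).toReal with hf
  have hgfin : ∀ x, g x ≠ ∞ := fun x => ne_of_lt (lt_of_le_of_lt (hgt x) ht.lt_top)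
  have hfm : Measurable f := hg.ennreal_toReal
  have key : ∀ μ : Measure X, ∫⁻ x, g x ∂μ = ∫⁻ s in Set.Ioi (0:ℝ), μ {a | s ≤ f a} := by
    intro μ
    rw [← lintegral_eq_lintegral_meas_le μ
      (Filter.Eventually.of_forall fun x => ENNReal.toReal_nonneg) hfm.aemeasurable]
    congr 1
    funext x
    exact (ENNReal.ofReal_toReal (hgfin x)).symm
  have hmono : ∀ s : ℝ, MeasurableSet {a : X | s ≤ f a} := fun s => hfm measurableSet_Ici
  have hβm : Measurable fun s : ℝ => β {a | s ≤ f a} := by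
    apply Antitone.measurable
    intro s₁ s₂ h12
    exact measure_mono (fun x hx => le_trans h12 hx)
  calc (∫⁻ x, g x ∂α) - (∫⁻ x, g x ∂β)
      = (∫⁻ s in Set.Ioi (0:ℝ), α {a | s ≤ f a}) - ∫⁻ s in Set.Ioi (0:ℝ), β {a | s ≤ f a} := by
        rw [key α, key β]
    _ ≤ ∫⁻ s in Set.Ioi (0:ℝ), (α {a | s ≤ f a} - β {a | s ≤ f a}) :=
        lintegral_sub_le _ _ hβm
    _ ≤ ∫⁻ s in Set.Ioi (0:ℝ), (Set.Ioc (0:ℝ) t.toReal).indicator (fun _ => D) s := by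
        apply setLIntegral_mono (measurable_const.indicator measurableSet_Ioc)
        intro s hs
        by_cases hst : s ≤ t.toReal
        · rw [Set.indicator_of_mem (Set.mem_Ioc.2 ⟨hs, hst⟩)]
          exact hD _ (hmono s)
        · push_neg at hst
          have hempty : {a : X | s ≤ f a} = ∅ := by
            ext x
            simp only [Set.mem_setOf_eq, Set.mem_empty_iff_false, iff_false, not_le]
            exact lt_of_le_of_lt (ENNReal.toReal_mono ht (hgt x)) hst
          rw [Set.indicator_of_notMem (fun hmem => absurd hmem.2 (not_le.2 hst)), hempty]
          simp
    _ = D * (volume.restrict (Set.Ioi (0:ℝ))) (Set.Ioc (0:ℝ) t.toReal) := by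
        rw [lintegral_indicator measurableSet_Ioc, setLIntegral_const]
    _ = t * D := by
        rw [Measure.restrict_apply' measurableSet_Ioi]
        have : Set.Ioc (0:ℝ) t.toReal ∩ Set.Ioi 0 = Set.Ioc (0:ℝ) t.toReal := by
          apply Set.inter_eq_self_of_subset_left
          exact Set.Ioc_subset_Ioi_self
        rw [this, Real.volume_Ioc, sub_zero, ENNReal.ofReal_toReal ht, mul_comm]

lemma contract {α β : Measure X} (hα : IsProbabilityMeasure α) (hβ : IsProbabilityMeasure β)
    {q : X → ℝ≥0∞} (hq : Measurable q) {a t D : ℝ≥0∞} (ht : t ≠ ∞)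
    (hqa : ∀ x, a ≤ q x) (hqt : ∀ x, q x ≤ a + t)
    (hD : ∀ A : Set X, MeasurableSet A → α A - β A ≤ D) :
    (∫⁻ x, q x ∂α) - (∫⁻ x, q x ∂β) ≤ t * D := by
  set g : X → ℝ≥0∞ := fun x => q x - a with hg
  have hgm : Measurable g := hq.sub measurable_const
  have hgt : ∀ x, g x ≤ t := fun x => tsub_le_iff_right.2 (by rw [add_comm]; exact hqt x)
  have hsplit : ∀ μ : Measure X, IsProbabilityMeasure μ →
      ∫⁻ x, q x ∂μ = (∫⁻ x, g x ∂μ) + a := by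
    intro μ hμ
    have heq : ∀ x, q x = g x + a := fun x => (tsub_add_cancel_of_le (hqa x)).symm
    calc ∫⁻ x, q x ∂μ = ∫⁻ x, g x + a ∂μ := by simp_rw [← heq]
      _ = (∫⁻ x, g x ∂μ) + a * μ Set.univ := by rw [lintegral_add_right _ measurable_const,
            lintegral_const]
      _ = (∫⁻ x, g x ∂μ) + a := by rw [measure_univ, mul_one]
  rw [hsplit α hα, hsplit β hβ]
  calc ((∫⁻ x, g x ∂α) + a) - ((∫⁻ x, g x ∂β) + a)
      ≤ (∫⁻ x, g x ∂α) - (∫⁻ x, g x ∂β) := by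
        rw [tsub_le_iff_right]
        calc (∫⁻ x, g x ∂α) + a
            ≤ ((∫⁻ x, g x ∂α) - (∫⁻ x, g x ∂β) + (∫⁻ x, g x ∂β)) + a :=
              add_le_add_left le_tsub_add a
          _ = (∫⁻ x, g x ∂α) - (∫⁻ x, g x ∂β) + ((∫⁻ x, g x ∂β) + a) := by ring
    _ ≤ t * D := core_contract hα hβ hgm ht hgt hD

/-- Normalized (projective) kernel `x ↦ δ_x M_{k,k+j} / m_{k,k+j}(x)`. -/
noncomputable def Qm (M : ℕ → Kernel X X) (j k : ℕ) (x : X) : Measure X :=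
  ((K M k j x) Set.univ)⁻¹ • K M k j x

section facts

variable (M : ℕ → Kernel X X) (hfin : ∀ i, IsFiniteKernel (M i))
  (hpos : ∀ k j (x : X), 0 < (seqApply M k j (Measure.dirac x)) Set.univ)

include hpos in
lemma mpos (k j : ℕ) (x : X) : 0 < K M k j x Set.univ := by
  have := hpos k j x
  rwa [seqApply_dirac] at this

include hfin in
lemma mfin (k j : ℕ) (x : X) : K M k j x Set.univ < ∞ := by
  haveI := Kfin M hfin k j
  exact (Kernel.measure_le_bound _ _ _).trans_lt (Kernel.bound_lt_top _)

lemma Qm_apply (j k : ℕ) (x : X) (A : Set X) :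
    Qm M j k x A = ((K M k j x) Set.univ)⁻¹ * K M k j x A := by
  rw [Qm, Measure.smul_apply, smul_eq_mul]

include hfin hpos in
lemma Qm_prob (j k : ℕ) (x : X) : IsProbabilityMeasure (Qm M j k x) := by
  constructor
  rw [Qm_apply, ENNReal.inv_mul_cancel (mpos M hpos k j x).ne' (mfin M hfin k j x).ne]

lemma Qm_coe_meas (j k : ℕ) {A : Set X} (hA : MeasurableSet A) :
    Measurable fun x => Qm M j k x A := by
  simp only [Qm_apply]
  exact ((Kernel.measurable_coe _ MeasurableSet.univ).inv).mul (Kernel.measurable_coe _ hA)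

lemma Qm_meas (j k : ℕ) : Measurable fun x => Qm M j k x :=
  Measure.measurable_of_measurable_coe _ fun A hA => Qm_coe_meas M j k hA

lemma Qm_zero (k : ℕ) : Qm M 0 k = Measure.dirac := by
  funext x
  have h1 : K M k 0 x = Measure.dirac x := Kernel.id_apply x
  rw [Qm, h1]
  simp

end facts

section key

variable (M : ℕ → Kernel X X) (hfin : ∀ i, IsFiniteKernel (M i))
  (hpos : ∀ k j (x : X), 0 < (seqApply M k j (Measure.dirac x)) Set.univ)
  (c : ℕ → ℝ≥0∞) (hc : ∀ k, c k ≤ 1)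
  (ν : ℕ → Measure X) (hν : ∀ k, IsProbabilityMeasure (ν k))
  (hmin : ∀ k x (f : X → ℝ≥0∞), Measurable f →
      c k * ((M k x) Set.univ) * ∫⁻ y, f y ∂(ν k) ≤ ∫⁻ y, f y ∂(M k x))
  (d : ℕ → ℝ≥0∞) (hd : ∀ k, d k ≤ 1)
  (hmaj : ∀ k j, d (k + 1) * (⨆ x : X, (seqApply M (k + 1) j (Measure.dirac x)) Set.univ)
        ≤ ∫⁻ x, (seqApply M (k + 1) j (Measure.dirac x)) Set.univ ∂(ν k))

include hfin hpos hc hν hmin hd hmaj in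
lemma key : ∀ j k (α β : Measure X), IsProbabilityMeasure α → IsProbabilityMeasure β →
    ∀ D : ℝ≥0∞, (∀ B : Set X, MeasurableSet B → α B - β B ≤ D) →
    ∀ A : Set X, MeasurableSet A →
      (α.bind (Qm M j k)) A - (β.bind (Qm M j k)) A
        ≤ (∏ i ∈ Finset.Ico k (k + j), (1 - c i * d (i + 1))) * D := by
  intro j
  induction j with
  | zero =>
      intro k α β hα hβ D hD A hA
      rw [Qm_zero, Measure.bind_dirac, Measure.bind_dirac]
      simpa using hD A hA
  | succ j ih =>
      intro k α β hα hβ D hD A hA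
      haveI := hν k
      haveI := hfin k
      set γ := c k * d (k + 1) with hγdef
      have hγ1 : γ ≤ 1 := mul_le_one' (hc k) (hd (k + 1))
      have hγtop : (1 : ℝ≥0∞) - γ ≠ ∞ := (tsub_le_self.trans_lt one_lt_top).ne
      have hm1 : Measurable fun y => K M (k+1) j y Set.univ :=
        Kernel.measurable_coe _ MeasurableSet.univ
      have hm1pos : ∀ y, 0 < K M (k+1) j y Set.univ := fun y => mpos M hpos (k+1) j y
      have hm1fin : ∀ y, K M (k+1) j y Set.univ < ∞ := fun y => mfin M hfin (k+1) j y
      have hmkpos : ∀ x, 0 < K M k (j+1) x Set.univ := fun x => mpos M hpos k (j+1) x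
      have hmkfin : ∀ x, K M k (j+1) x Set.univ < ∞ := fun x => mfin M hfin k (j+1) x
      set Z := ∫⁻ y, K M (k+1) j y Set.univ ∂(ν k) with hZdef
      have hZpos : 0 < Z := by
        rw [hZdef, lintegral_pos_iff_support hm1]
        have hsup : (Function.support fun y => K M (k+1) j y Set.univ) = Set.univ :=
          Set.eq_univ_of_forall fun y => (hm1pos y).ne'
        rw [hsup, measure_univ]
        norm_num
      have hZfin : Z ≠ ∞ := by
        haveI := Kfin M hfin (k+1) j
        have hb : Z ≤ Kernel.bound (K M (k+1) j) := by
          calc Z ≤ ∫⁻ _, Kernel.bound (K M (k+1) j) ∂(ν k) :=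
                lintegral_mono fun y => Kernel.measure_le_bound _ _ _
            _ = Kernel.bound (K M (k+1) j) := by
                rw [lintegral_const, measure_univ, mul_one]
        exact (hb.trans_lt (Kernel.bound_lt_top _)).ne
      set νb : Measure X := Z⁻¹ • (ν k).withDensity (fun y => K M (k+1) j y Set.univ)
        with hνbdef
      have hwdZ : (ν k).withDensity (fun y => K M (k+1) j y Set.univ) Set.univ = Z := by
        rw [withDensity_apply _ MeasurableSet.univ, setLIntegral_univ]
      haveI hνbprob : IsProbabilityMeasure νb := by
        constructor
        rw [hνbdef, Measure.smul_apply, smul_eq_mul, hwdZ,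
          ENNReal.inv_mul_cancel hZpos.ne' hZfin]
      have hZνb : ∀ B : Set X,
          Z * νb B = (ν k).withDensity (fun y => K M (k+1) j y Set.univ) B := by
        intro B
        rw [hνbdef, Measure.smul_apply, smul_eq_mul, ← mul_assoc,
          ENNReal.mul_inv_cancel hZpos.ne' hZfin, one_mul]
      set Qs : X → Measure X := fun x => ((K M k (j+1) x) Set.univ)⁻¹ •
        (M k x).withDensity (fun y => K M (k+1) j y Set.univ) with hQsdef
      have hKx : ∀ (x : X) (B : Set X), MeasurableSet B →
          K M k (j+1) x B = ∫⁻ y, K M (k+1) j y B ∂(M k x) := by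
        intro x B hB
        rw [K_succ_left M hfin k j, Kernel.comp_apply' _ _ _ hB]
      have hmk : ∀ x, K M k (j+1) x Set.univ
          = ∫⁻ y, K M (k+1) j y Set.univ ∂(M k x) :=
        fun x => hKx x _ MeasurableSet.univ
      have hQsA : ∀ (x : X) (B : Set X), Qs x B = ((K M k (j+1) x) Set.univ)⁻¹ *
          (M k x).withDensity (fun y => K M (k+1) j y Set.univ) B := by
        intro x B
        simp only [hQsdef, Measure.smul_apply, smul_eq_mul]
      have hQsuniv : ∀ x, Qs x Set.univ = 1 := by
        intro x
        rw [hQsA, withDensity_apply _ MeasurableSet.univ, setLIntegral_univ, ← hmk,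
          ENNReal.inv_mul_cancel (hmkpos x).ne' (hmkfin x).ne]
      have hQscoe : ∀ (B : Set X), MeasurableSet B → Measurable fun x => Qs x B := by
        intro B hB
        simp only [hQsA]
        apply Measurable.mul ((Kernel.measurable_coe _ MeasurableSet.univ).inv)
        have heq : ∀ x, (M k x).withDensity (fun y => K M (k+1) j y Set.univ) B
            = ∫⁻ y, B.indicator (fun y => K M (k+1) j y Set.univ) y ∂(M k x) := by
          intro x
          rw [withDensity_apply _ hB, ← lintegral_indicator hB]
        simp_rw [heq]
        exact (hm1.indicator hB).lintegral_kernel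
      have hQsm : Measurable Qs :=
        Measure.measurable_of_measurable_coe _ fun B hB => hQscoe B hB
      have hlow : ∀ (x : X) (B : Set X), MeasurableSet B → γ * νb B ≤ Qs x B := by
        intro x B hB
        have hind : Measurable (B.indicator fun y => K M (k+1) j y Set.univ) :=
          hm1.indicator hB
        have h1 := hmin k x _ hind
        have hint : ∀ (μ : Measure X),
            ∫⁻ y, B.indicator (fun y => K M (k+1) j y Set.univ) y ∂μ
            = μ.withDensity (fun y => K M (k+1) j y Set.univ) B := by
          intro μ
          rw [lintegral_indicator hB, withDensity_apply _ hB]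
        rw [hint, hint] at h1
        have hdm : d (k+1) * K M k (j+1) x Set.univ ≤ M k x Set.univ * Z := by
          have hmaj' : d (k+1) * (⨆ y, K M (k+1) j y Set.univ) ≤ Z := by
            have h := hmaj k j
            simp_rw [seqApply_dirac] at h
            exact h
          calc d (k+1) * K M k (j+1) x Set.univ
              = d (k+1) * ∫⁻ y, K M (k+1) j y Set.univ ∂(M k x) := by rw [hmk]
            _ ≤ d (k+1) * ∫⁻ _, (⨆ y, K M (k+1) j y Set.univ) ∂(M k x) := by
                gcongr with y
                exact le_iSup (fun y => K M (k+1) j y Set.univ) y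
            _ = d (k+1) * ((⨆ y, K M (k+1) j y Set.univ) * M k x Set.univ) := by
                rw [lintegral_const]
            _ = (d (k+1) * (⨆ y, K M (k+1) j y Set.univ)) * M k x Set.univ := by ring
            _ ≤ Z * M k x Set.univ := mul_le_mul_left hmaj' _
            _ = M k x Set.univ * Z := mul_comm _ _
        calc γ * νb B
            = ((K M k (j+1) x) Set.univ)⁻¹ * (K M k (j+1) x Set.univ) * (γ * νb B) := by
              rw [ENNReal.inv_mul_cancel (hmkpos x).ne' (hmkfin x).ne, one_mul]
          _ = ((K M k (j+1) x) Set.univ)⁻¹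
              * (c k * (d (k+1) * K M k (j+1) x Set.univ) * νb B) := by
              rw [hγdef]; ring
          _ ≤ ((K M k (j+1) x) Set.univ)⁻¹
              * (c k * (M k x Set.univ * Z) * νb B) := by gcongr
          _ = ((K M k (j+1) x) Set.univ)⁻¹
              * (c k * M k x Set.univ * (Z * νb B)) := by ring
          _ = ((K M k (j+1) x) Set.univ)⁻¹ * (c k * M k x Set.univ
              * ((ν k).withDensity (fun y => K M (k+1) j y Set.univ) B)) := by rw [hZνb]
          _ ≤ ((K M k (j+1) x) Set.univ)⁻¹
              * ((M k x).withDensity (fun y => K M (k+1) j y Set.univ) B) :=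
              mul_le_mul_right h1 _
          _ = Qs x B := (hQsA x B).symm
      have hup : ∀ (x : X) (B : Set X), MeasurableSet B →
          Qs x B ≤ γ * νb B + (1 - γ) := by
        intro x B hB
        have h1 : Qs x B + Qs x Bᶜ = 1 := by
          rw [measure_add_measure_compl hB, hQsuniv x]
        have h2 : γ * νb B + γ * νb Bᶜ = γ := by
          rw [← mul_add, measure_add_measure_compl hB, measure_univ, mul_one]
        have h3 : Qs x B + γ * νb Bᶜ ≤ (γ * νb B + (1 - γ)) + γ * νb Bᶜ := by
          calc Qs x B + γ * νb Bᶜ ≤ Qs x B + Qs x Bᶜ :=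
                add_le_add_right (hlow x Bᶜ hB.compl) _
            _ = 1 := h1
            _ = (1 - γ) + γ := (tsub_add_cancel_of_le hγ1).symm
            _ = (1 - γ) + (γ * νb B + γ * νb Bᶜ) := by rw [h2]
            _ = (γ * νb B + (1 - γ)) + γ * νb Bᶜ := by ring
        have hfin' : γ * νb Bᶜ ≠ ∞ :=
          ((mul_le_one' hγ1 prob_le_one).trans_lt one_lt_top).ne
        exact (ENNReal.add_le_add_iff_right hfin').1 h3
      have hbind_prob : ∀ (μ : Measure X), IsProbabilityMeasure μ →
          IsProbabilityMeasure (μ.bind Qs) := by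
        intro μ hμ
        constructor
        rw [Measure.bind_apply MeasurableSet.univ hQsm.aemeasurable]
        simp_rw [hQsuniv]
        rw [lintegral_one, measure_univ]
      have hD' : ∀ B : Set X, MeasurableSet B →
          (α.bind Qs) B - (β.bind Qs) B ≤ (1 - γ) * D := by
        intro B hB
        rw [Measure.bind_apply hB hQsm.aemeasurable, Measure.bind_apply hB hQsm.aemeasurable]
        exact contract hα hβ (hQscoe B hB) hγtop
          (fun x => hlow x B hB) (fun x => hup x B hB) hD
      have hdec : ∀ (μ : Measure X),
          (μ.bind (Qm M (j+1) k)) A = ((μ.bind Qs).bind (Qm M j (k+1))) A := by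
        intro μ
        rw [Measure.bind_apply hA (Qm_meas M j (k+1)).aemeasurable,
          Measure.lintegral_bind hQsm.aemeasurable (Qm_coe_meas M j (k+1) hA).aemeasurable,
          Measure.bind_apply hA (Qm_meas M (j+1) k).aemeasurable]
        congr 1
        funext x
        rw [Qm_apply, hKx x A hA]
        have hQsint : ∫⁻ y, Qm M j (k+1) y A ∂(Qs x)
            = ((K M k (j+1) x) Set.univ)⁻¹
              * ∫⁻ y, K M (k+1) j y Set.univ * Qm M j (k+1) y A ∂(M k x) := by
          simp only [hQsdef]
          rw [lintegral_smul_measure,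
            lintegral_withDensity_eq_lintegral_mul _ hm1 (Qm_coe_meas M j (k+1) hA)]
          rfl
        rw [hQsint]
        congr 1
        apply lintegral_congr
        intro y
        rw [Qm_apply, ← mul_assoc, ENNReal.mul_inv_cancel (hm1pos y).ne' (hm1fin y).ne,
          one_mul]
      rw [hdec α, hdec β]
      calc (α.bind Qs).bind (Qm M j (k+1)) A - (β.bind Qs).bind (Qm M j (k+1)) A
          ≤ (∏ i ∈ Finset.Ico (k+1) (k+1+j), (1 - c i * d (i + 1))) * ((1 - γ) * D) :=
            ih (k+1) (α.bind Qs) (β.bind Qs) (hbind_prob α hα) (hbind_prob β hβ)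
              ((1 - γ) * D) hD' A hA
        _ = (∏ i ∈ Finset.Ico k (k + (j+1)), (1 - c i * d (i + 1))) * D := by
            rw [Finset.prod_eq_prod_Ico_succ_bot (show k < k + (j+1) by omega)]
            have harith : k + 1 + j = k + (j + 1) := by omega
            rw [harith, hγdef]
            ring

end key

lemma final_eq (M : ℕ → Kernel X X) (hfin : ∀ i, IsFiniteKernel (M i))
    (hpos : ∀ k j (x : X), 0 < (seqApply M k j (Measure.dirac x)) Set.univ)
    (k j : ℕ) (μ : Measure X) (hμfin : IsFiniteMeasure μ) (hμne : μ ≠ 0) :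
    ∃ α : Measure X, IsProbabilityMeasure α ∧ ∀ A : Set X, MeasurableSet A →
      (((seqApply M k j μ) Set.univ)⁻¹ • seqApply M k j μ) A = (α.bind (Qm M j k)) A := by
  haveI := Kfin M hfin k j
  have hmfun : Measurable fun x => K M k j x Set.univ :=
    Kernel.measurable_coe _ MeasurableSet.univ
  set ρ : Measure X := μ.withDensity (fun x => K M k j x Set.univ) with hρdef
  have hρuniv : ρ Set.univ = ∫⁻ x, K M k j x Set.univ ∂μ := by
    rw [hρdef, withDensity_apply _ MeasurableSet.univ, setLIntegral_univ]
  have hIpos : 0 < ∫⁻ x, K M k j x Set.univ ∂μ := by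
    rw [lintegral_pos_iff_support hmfun]
    have hsup : (Function.support fun x => K M k j x Set.univ) = Set.univ :=
      Set.eq_univ_of_forall fun x => (mpos M hpos k j x).ne'
    rw [hsup]
    exact Measure.measure_univ_pos.2 hμne
  have hIfin : (∫⁻ x, K M k j x Set.univ ∂μ) ≠ ∞ := by
    have hb : (∫⁻ x, K M k j x Set.univ ∂μ)
        ≤ Kernel.bound (K M k j) * μ Set.univ := by
      calc (∫⁻ x, K M k j x Set.univ ∂μ)
          ≤ ∫⁻ _, Kernel.bound (K M k j) ∂μ :=
            lintegral_mono fun x => Kernel.measure_le_bound _ _ _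
        _ = Kernel.bound (K M k j) * μ Set.univ := lintegral_const _
    exact (hb.trans_lt (ENNReal.mul_lt_top (Kernel.bound_lt_top _)
      (measure_lt_top μ _))).ne
  refine ⟨(ρ Set.univ)⁻¹ • ρ, ?_, ?_⟩
  · constructor
    rw [Measure.smul_apply, smul_eq_mul, hρuniv, ENNReal.inv_mul_cancel hIpos.ne' hIfin]
  · intro A hA
    have hmass : (seqApply M k j μ) Set.univ = ∫⁻ x, K M k j x Set.univ ∂μ := by
      rw [seqApply_eq_bind, Measure.bind_apply MeasurableSet.univ (Kernel.measurable _).aemeasurable]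
    have hsetval : (seqApply M k j μ) A = ∫⁻ x, K M k j x A ∂μ := by
      rw [seqApply_eq_bind, Measure.bind_apply hA (Kernel.measurable _).aemeasurable]
    rw [Measure.smul_apply, smul_eq_mul, hmass, hsetval,
      Measure.bind_apply hA (Qm_meas M j k).aemeasurable, lintegral_smul_measure, hρuniv, hρdef,
      lintegral_withDensity_eq_lintegral_mul _ hmfun (Qm_coe_meas M j k hA)]
    congr 1
    apply lintegral_congr
    intro x
    simp only [Pi.mul_apply]
    rw [Qm_apply, ← mul_assoc,
      ENNReal.mul_inv_cancel (mpos M hpos k j x).ne' (mfin M hfin k j x).ne, one_mul]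

end ProjContr

/-- Projective contraction: `‖μ₁·M_{k,n} − μ₂·M_{k,n}‖_TV ≤ 2 ∏_{i=k}^{n-1} (1-γᵢ)`,
where `γᵢ = cᵢ d_{i+1}` come from the Doeblin-type minorations. -/
theorem projective_contraction
    (M : ℕ → Kernel X X) (hfin : ∀ i, IsFiniteKernel (M i))
    (hpos : ∀ k j (x : X), 0 < (seqApply M k j (Measure.dirac x)) Set.univ)
    (c : ℕ → ℝ≥0∞) (hc : ∀ k, c k ≤ 1)
    (ν : ℕ → Measure X) (hν : ∀ k, IsProbabilityMeasure (ν k))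
    (hmin : ∀ k x (f : X → ℝ≥0∞), Measurable f →
      c k * ((M k x) Set.univ) * ∫⁻ y, f y ∂(ν k) ≤ ∫⁻ y, f y ∂(M k x))
    (d : ℕ → ℝ≥0∞) (hd : ∀ k, d k ≤ 1)
    (hmaj : ∀ k j,
      d (k + 1) * (⨆ x : X, (seqApply M (k + 1) j (Measure.dirac x)) Set.univ)
        ≤ ∫⁻ x, (seqApply M (k + 1) j (Measure.dirac x)) Set.univ ∂(ν k)) :
    ∀ (k n : ℕ), k ≤ n → ∀ (μ₁ μ₂ : Measure X),
      IsFiniteMeasure μ₁ → IsFiniteMeasure μ₂ → μ₁ ≠ 0 → μ₂ ≠ 0 →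
      tvNorm (((seqApply M k (n - k) μ₁) Set.univ)⁻¹ • seqApply M k (n - k) μ₁)
          (((seqApply M k (n - k) μ₂) Set.univ)⁻¹ • seqApply M k (n - k) μ₂)
        ≤ 2 * ∏ i ∈ Finset.Ico k n, (1 - c i * d (i + 1)) := by
  intro k n hkn μ₁ μ₂ hf1 hf2 hne1 hne2
  obtain ⟨α, hαprob, hαeq⟩ := ProjContr.final_eq M hfin hpos k (n - k) μ₁ hf1 hne1
  obtain ⟨β, hβprob, hβeq⟩ := ProjContr.final_eq M hfin hpos k (n - k) μ₂ hf2 hne2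
  have hprod : ∀ (σ τ : Measure X), IsProbabilityMeasure σ → IsProbabilityMeasure τ →
      ∀ A : Set X, MeasurableSet A →
      (σ.bind (ProjContr.Qm M (n - k) k)) A - (τ.bind (ProjContr.Qm M (n - k) k)) A
        ≤ ∏ i ∈ Finset.Ico k n, (1 - c i * d (i + 1)) := by
    intro σ τ hσ hτ A hA
    have hD : ∀ B : Set X, MeasurableSet B → σ B - τ B ≤ 1 := by
      intro B _
      exact tsub_le_iff_right.2 (prob_le_one.trans le_self_add)
    have h := ProjContr.key M hfin hpos c hc ν hν hmin d hd hmaj (n - k) k σ τ hσ hτ 1 hD A hA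
    rw [mul_one, Nat.add_sub_cancel' hkn] at h
    exact h
  rw [tvNorm, two_mul]
  apply add_le_add
  · apply iSup_le
    intro A
    apply iSup_le
    intro hA
    rw [hαeq A hA, hβeq A hA]
    exact hprod α β hαprob hβprob A hA
  · apply iSup_le
    intro A
    apply iSup_le
    intro hA
    rw [hαeq A hA, hβeq A hA]
    exact hprod β α hβprob hαprob A hA
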